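/- Fix s < 0 and 0 < T < 2π. There is no space X_T continuously embedded in C([-T,T]; H^s_per) such that both ‖S(t)φ‖_{X_T} ≤ c₀‖φ‖_{H^s_per} for all φ ∈ H^s_per and ‖∫₀ᵗ S(t-τ)Λ[u_x(τ)u(τ)]dτ‖_{X_T} ≤ c₀‖u‖²_{X_T} for all u ∈ X_T hold. In particular, the key quantitative fact is: for φ_N(x) = N^{-s}cos(Nx), the ratio ‖ψ_N(·,t)‖_{H^s_per}/‖φ_N‖²_{H^s_per} ∼ N^{-s}(1-cos(γ_N t))^{1/2} → ∞ as N → ∞ for each fixed t ∈ (0,T), where γ_N = 2N²/((1+N)(1+2N)) and ψ_N is the bilinear Duhamel term associated with φ_N. -/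

import Mathlib

/-!
Ill-posedness of the periodic rBO equation for s < 0 (Theorem 4.1):
the quadratic Duhamel estimate ‖∫₀ᵗ S(t-τ)Λ[u uₓ]dτ‖_{H^s} ≲ ‖φ‖²_{H^s}
fails.  Quantitatively, for φ_N(x) = N^{-s} cos(Nx) (so ‖φ_N‖_{H^s_per} ∼ 1)
the bilinear Duhamel term ψ_N satisfies
  ‖ψ_N(·,t)‖_{H^s_per} / ‖φ_N‖²_{H^s_per} ∼ N^{-s}(1-cos(γ_N t))^{1/2} → ∞
as N → ∞ for each fixed t ∈ (0,T), 0 < T < 2π; hence no constant c₀ can make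
the bilinear estimate hold, and no space X_T as in the theorem can exist.
-/

open MeasureTheory

noncomputable def hNorm (s : ℝ) (a : ℤ → ℂ) : ℝ :=
  Real.sqrt (2 * Real.pi * ∑' k : ℤ, (1 + (k : ℝ) ^ 2) ^ s * ‖a k‖ ^ 2)

noncomputable def pm (n : ℤ) : ℝ := (n : ℝ) / (1 + |(n : ℝ)|)

/-- `n`-th Fourier coefficient of `ψ_φ(t) = ∫₀ᵗ S(t-τ) Λ[S(τ)φ (S(τ)φ)ₓ] dτ`. -/
noncomputable def duhamelCoef (a : ℤ → ℂ) (t : ℝ) (n : ℤ) : ℂ :=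
  ∫ τ in (0:ℝ)..t,
    Complex.exp (-Complex.I * (pm n : ℂ) * ((t : ℂ) - (τ : ℂ))) * ((1 + |(n : ℝ)| : ℝ) : ℂ)⁻¹ *
      ∑' m : ℤ, (Complex.exp (-Complex.I * (pm m : ℂ) * (τ : ℂ)) * a m) *
        (Complex.I * ((n - m : ℤ) : ℂ)) *
          (Complex.exp (-Complex.I * (pm (n - m) : ℂ) * (τ : ℂ)) * a (n - m))

/-- Fourier coefficients of `φ_N(x) = N^{-s} cos (N x)`. -/
noncomputable def cosCoef (s : ℝ) (N : ℕ) : ℤ → ℂ := fun k =>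
  if k = (N : ℤ) ∨ k = -(N : ℤ) then (((N : ℝ) ^ (-s) / 2 : ℝ) : ℂ) else 0

/-! ### Auxiliary definitions -/

noncomputable def cc (s : ℝ) (N : ℕ) : ℝ := (N:ℝ)^(-s)/2
noncomputable def ga (N : ℕ) : ℝ := 2*(N:ℝ)^2/((1+(N:ℝ))*(1+2*(N:ℝ)))

/-- the summand in duhamelCoef -/
noncomputable def trm (a : ℤ → ℂ) (τ : ℝ) (n m : ℤ) : ℂ :=
  (Complex.exp (-Complex.I * (pm m : ℂ) * (τ : ℂ)) * a m) *
        (Complex.I * ((n - m : ℤ) : ℂ)) *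
          (Complex.exp (-Complex.I * (pm (n - m) : ℂ) * (τ : ℂ)) * a (n - m))

/-! ### Elementary facts -/

lemma cc_nonneg (s:ℝ) (N:ℕ) : 0 ≤ cc s N := by unfold cc; positivity

lemma cc_pos (s:ℝ) (N:ℕ) (hN : 1 ≤ N) : 0 < cc s N := by
  have : (0:ℝ) < (N:ℝ) := by exact_mod_cast hN
  unfold cc; positivity

lemma ga_nonneg (N:ℕ) : 0 ≤ ga N := by unfold ga; positivity

lemma ga_pos (N:ℕ) (hN : 1 ≤ N) : 0 < ga N := by
  have : (0:ℝ) < (N:ℝ) := by exact_mod_cast hN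
  unfold ga; positivity

lemma pm_nat (N : ℕ) : pm (N : ℤ) = (N:ℝ)/(1+(N:ℝ)) := by
  simp [pm, abs_of_nonneg (by positivity : (0:ℝ) ≤ (N:ℝ))]

lemma pm_two_nat (N : ℕ) : pm (2*(N:ℤ)) = 2*(N:ℝ)/(1+2*(N:ℝ)) := by
  have h : ((2*(N:ℤ) : ℤ):ℝ) = 2*(N:ℝ) := by push_cast; ring
  rw [pm, h, abs_of_nonneg (by positivity : (0:ℝ) ≤ 2*(N:ℝ))]

lemma pm_neg' (n : ℤ) : pm (-n) = - pm n := by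
  simp [pm, neg_div]

lemma ga_eq (N : ℕ) : ga N = 2 * pm (N:ℤ) - pm (2*(N:ℤ)) := by
  have h1 : (0:ℝ) < 1 + (N:ℝ) := by positivity
  have h2 : (0:ℝ) < 1 + 2*(N:ℝ) := by positivity
  rw [pm_nat, pm_two_nat]
  rw [ga]; field_simp
  ring

lemma cosCoef_eq_zero (s:ℝ) (N:ℕ) (k:ℤ) (h1 : k ≠ (N:ℤ)) (h2 : k ≠ -(N:ℤ)) :
    cosCoef s N k = 0 := by simp [cosCoef, h1, h2]

lemma cosCoef_N (s:ℝ) (N:ℕ) : cosCoef s N (N:ℤ) = ((cc s N : ℝ):ℂ) := by simp [cosCoef, cc]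

lemma cosCoef_negN (s:ℝ) (N:ℕ) : cosCoef s N (-(N:ℤ)) = ((cc s N : ℝ):ℂ) := by
  simp [cosCoef, cc]

/-! ### The tsum inside the Duhamel integral -/

lemma trm_eq_zero (s:ℝ) (N:ℕ) (τ:ℝ) (n m : ℤ)
    (h : m ≠ (N:ℤ) ∧ m ≠ -(N:ℤ) ∨ n - m ≠ (N:ℤ) ∧ n - m ≠ -(N:ℤ)) :
    trm (cosCoef s N) τ n m = 0 := by
  rcases h with ⟨h1,h2⟩|⟨h1,h2⟩
  · simp [trm, cosCoef_eq_zero s N m h1 h2]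
  · simp [trm, cosCoef_eq_zero s N _ h1 h2]

lemma tsum_trm (s:ℝ) (N:ℕ) (hN : 1 ≤ N) (τ : ℝ) (n : ℤ) :
    ∑' m : ℤ, trm (cosCoef s N) τ n m
      = trm (cosCoef s N) τ n (N:ℤ) + trm (cosCoef s N) τ n (-(N:ℤ)) := by
  have hne : (N:ℤ) ≠ -(N:ℤ) := by omega
  rw [tsum_eq_sum (s := {(N:ℤ), -(N:ℤ)}) (by
    intro m hm
    simp only [Finset.mem_insert, Finset.mem_singleton, not_or] at hm
    exact trm_eq_zero s N τ n m (Or.inl ⟨hm.1, hm.2⟩))]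
  rw [Finset.sum_pair hne]

lemma tsum_other (s:ℝ) (N:ℕ) (hN : 1 ≤ N) (τ : ℝ) (n : ℤ)
    (h2 : n ≠ 2*(N:ℤ)) (h2' : n ≠ -(2*(N:ℤ))) (h0 : n ≠ 0) :
    ∑' m : ℤ, trm (cosCoef s N) τ n m = 0 := by
  rw [tsum_trm s N hN τ n]
  rw [trm_eq_zero s N τ n (N:ℤ) (Or.inr ⟨by omega, by omega⟩),
      trm_eq_zero s N τ n (-(N:ℤ)) (Or.inr ⟨by omega, by omega⟩), add_zero]

lemma tsum_zero' (s:ℝ) (N:ℕ) (hN : 1 ≤ N) (τ : ℝ) :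
    ∑' m : ℤ, trm (cosCoef s N) τ 0 m = 0 := by
  rw [tsum_trm s N hN τ 0]
  have e1 : (0:ℤ) - (N:ℤ) = -(N:ℤ) := by ring
  have e2 : (0:ℤ) - (-(N:ℤ)) = (N:ℤ) := by ring
  rw [trm, trm, e1, e2, cosCoef_N, cosCoef_negN]
  push_cast
  rw [show pm (-(N:ℤ)) = - pm (N:ℤ) by simp [pm, neg_div]]
  push_cast
  ring

lemma tsum_2N (s:ℝ) (N:ℕ) (hN : 1 ≤ N) (τ : ℝ) :
    ∑' m : ℤ, trm (cosCoef s N) τ (2*(N:ℤ)) m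
      = Complex.I * (N:ℂ) * ((cc s N : ℝ):ℂ)^2
          * (Complex.exp (-Complex.I * (pm (N:ℤ) : ℂ) * (τ:ℂ)) *
             Complex.exp (-Complex.I * (pm (N:ℤ) : ℂ) * (τ:ℂ))) := by
  rw [tsum_trm s N hN τ _]
  rw [trm_eq_zero s N τ _ (-(N:ℤ)) (Or.inr ⟨by omega, by omega⟩), add_zero]
  rw [trm, show 2*(N:ℤ) - (N:ℤ) = (N:ℤ) by ring, cosCoef_N]
  push_cast
  ring

lemma tsum_neg2N (s:ℝ) (N:ℕ) (hN : 1 ≤ N) (τ : ℝ) :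
    ∑' m : ℤ, trm (cosCoef s N) τ (-(2*(N:ℤ))) m
      = -(Complex.I * (N:ℂ)) * ((cc s N : ℝ):ℂ)^2
          * (Complex.exp (Complex.I * (pm (N:ℤ) : ℂ) * (τ:ℂ)) *
             Complex.exp (Complex.I * (pm (N:ℤ) : ℂ) * (τ:ℂ))) := by
  rw [tsum_trm s N hN τ _]
  rw [trm_eq_zero s N τ _ (N:ℤ) (Or.inr ⟨by omega, by omega⟩), zero_add]
  rw [trm, show -(2*(N:ℤ)) - (-(N:ℤ)) = -(N:ℤ) by ring, cosCoef_negN]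
  rw [show pm (-(N:ℤ)) = - pm (N:ℤ) by simp [pm, neg_div]]
  push_cast
  ring

/-! ### Evaluating the Duhamel integral -/

lemma duhamelCoef_eq (a : ℤ → ℂ) (t : ℝ) (n : ℤ) :
    duhamelCoef a t n = ∫ τ in (0:ℝ)..t,
      Complex.exp (-Complex.I * (pm n : ℂ) * ((t : ℂ) - (τ : ℂ))) * ((1 + |(n : ℝ)| : ℝ) : ℂ)⁻¹ *
        ∑' m : ℤ, trm a τ n m := rfl

lemma coef_of_tsum_zero (a : ℤ → ℂ) (t : ℝ) (n : ℤ)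
    (h : ∀ τ : ℝ, ∑' m : ℤ, trm a τ n m = 0) : duhamelCoef a t n = 0 := by
  rw [duhamelCoef_eq]
  simp [h]

/-- abstract exponential integral evaluation -/
lemma coef_exp_eval (a : ℤ → ℂ) (t : ℝ) (n : ℤ) (C : ℂ) (α γ : ℝ)
    (hγ : γ ≠ 0) (hγeq : γ = 2 * α - pm n)
    (h : ∀ τ : ℝ, ∑' m : ℤ, trm a τ n m
        = C * (Complex.exp (-Complex.I * (α:ℂ) * (τ:ℂ)) * Complex.exp (-Complex.I * (α:ℂ) * (τ:ℂ)))) :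
    duhamelCoef a t n = Complex.exp (-Complex.I * (pm n : ℂ) * (t:ℂ)) * ((1 + |(n : ℝ)| : ℝ) : ℂ)⁻¹
        * C * ((Complex.exp (-Complex.I * (γ:ℂ) * (t:ℂ)) - 1) / (-Complex.I * (γ:ℂ))) := by
  have hw : (-Complex.I * (γ:ℂ)) ≠ 0 := by
    simp [Complex.I_ne_zero, Complex.ofReal_eq_zero, hγ]
  rw [duhamelCoef_eq]
  have key : ∀ τ ∈ Set.uIcc (0:ℝ) t,
      Complex.exp (-Complex.I * (pm n : ℂ) * ((t : ℂ) - (τ : ℂ))) * ((1 + |(n : ℝ)| : ℝ) : ℂ)⁻¹ *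
        ∑' m : ℤ, trm a τ n m
      = (Complex.exp (-Complex.I * (pm n : ℂ) * (t:ℂ)) * ((1 + |(n : ℝ)| : ℝ) : ℂ)⁻¹ * C) *
          Complex.exp ((-Complex.I * (γ:ℂ)) * (τ:ℂ)) := by
    intro τ _
    rw [h τ]
    have hexp : Complex.exp (-Complex.I * (pm n : ℂ) * ((t : ℂ) - (τ : ℂ))) *
        (Complex.exp (-Complex.I * (α:ℂ) * (τ:ℂ)) * Complex.exp (-Complex.I * (α:ℂ) * (τ:ℂ)))
        = Complex.exp (-Complex.I * (pm n : ℂ) * (t:ℂ)) * Complex.exp ((-Complex.I * (γ:ℂ)) * (τ:ℂ)) := by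
      rw [← Complex.exp_add, ← Complex.exp_add, ← Complex.exp_add]
      congr 1
      have : (γ:ℂ) = 2 * (α:ℂ) - (pm n : ℂ) := by
        rw [hγeq]; push_cast; ring
      rw [this]; ring
    calc Complex.exp (-Complex.I * (pm n : ℂ) * ((t : ℂ) - (τ : ℂ))) * ((1 + |(n : ℝ)| : ℝ) : ℂ)⁻¹ *
          (C * (Complex.exp (-Complex.I * (α:ℂ) * (τ:ℂ)) * Complex.exp (-Complex.I * (α:ℂ) * (τ:ℂ))))
        = (((1 + |(n : ℝ)| : ℝ) : ℂ)⁻¹ * C) * (Complex.exp (-Complex.I * (pm n : ℂ) * ((t : ℂ) - (τ : ℂ))) *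
            (Complex.exp (-Complex.I * (α:ℂ) * (τ:ℂ)) * Complex.exp (-Complex.I * (α:ℂ) * (τ:ℂ)))) := by ring
      _ = _ := by rw [hexp]; ring
  rw [intervalIntegral.integral_congr key, intervalIntegral.integral_const_mul,
      integral_exp_mul_complex hw]
  field_simp
  simp

/-! ### Norms -/

lemma norm_exp_sub_one_sq (x : ℝ) :
    ‖Complex.exp (-Complex.I * (x:ℂ) ) - 1‖^2 = 2 - 2*Real.cos x := by
  have h1 : -Complex.I * (x:ℂ) = ((-x : ℝ):ℂ) * Complex.I := by push_cast; ring
  rw [h1, Complex.exp_mul_I, ← Complex.ofReal_cos, ← Complex.ofReal_sin]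
  have h2 : ((Real.cos (-x) : ℝ):ℂ) + ((Real.sin (-x) :ℝ):ℂ) * Complex.I - 1
      = ((Real.cos (-x) - 1 : ℝ):ℂ) + ((Real.sin (-x) : ℝ):ℂ) * Complex.I := by
    push_cast; ring
  rw [h2, Complex.sq_norm, Complex.normSq_add_mul_I]
  rw [Real.cos_neg, Real.sin_neg]
  nlinarith [Real.sin_sq_add_cos_sq x]

lemma norm_eval (n : ℤ) (C : ℂ) (γ t : ℝ) (hγ : γ ≠ 0) :
    ‖Complex.exp (-Complex.I * (pm n : ℂ) * (t:ℂ)) * ((1 + |(n : ℝ)| : ℝ) : ℂ)⁻¹ * C *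
       ((Complex.exp (-Complex.I * (γ:ℂ) * (t:ℂ)) - 1) / (-Complex.I * (γ:ℂ)))‖^2
     = ((1 + |(n:ℝ)|)⁻¹)^2 * ‖C‖^2 * ((2 - 2*Real.cos (γ*t)) / γ^2) := by
  have e1 : -Complex.I * ((pm n : ℝ):ℂ) * (t:ℂ) = ((-(pm n * t):ℝ):ℂ) * Complex.I := by
    push_cast; ring
  have e2 : -Complex.I * ((γ : ℝ):ℂ) * (t:ℂ) = -Complex.I * ((γ * t : ℝ):ℂ) := by
    push_cast; ring
  rw [norm_mul, norm_mul, norm_mul, norm_div, e1, e2]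
  rw [Complex.norm_exp_ofReal_mul_I]
  rw [norm_inv, Complex.norm_real, Real.norm_eq_abs,
      abs_of_nonneg (by positivity : (0:ℝ) ≤ 1 + |(n:ℝ)|)]
  rw [norm_mul, norm_neg, Complex.norm_I, Complex.norm_real, Real.norm_eq_abs, one_mul, one_mul]
  have hx := norm_exp_sub_one_sq (γ * t)
  have habs : |γ|^2 = γ^2 := sq_abs γ
  rw [show ∀ a b c d : ℝ, (a*b*(c/d))^2 = a^2*b^2*(c^2/d^2) from fun a b c d => by ring]
  rw [hx, habs]

/-! ### hNorm computations -/

lemma hNorm_sq_general (s : ℝ) (a : ℤ → ℂ) (n : ℤ) (hn : n ≠ -n)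
    (hz : ∀ k, k ≠ n → k ≠ -n → a k = 0) (hsym : ‖a (-n)‖ = ‖a n‖) :
    (hNorm s a)^2 = 2 * Real.pi * (2 * (1 + (n:ℝ)^2)^s * ‖a n‖^2) := by
  have hsum : ∑' k : ℤ, (1 + (k : ℝ) ^ 2) ^ s * ‖a k‖ ^ 2
      = 2 * (1 + (n:ℝ)^2)^s * ‖a n‖^2 := by
    rw [tsum_eq_sum (s := {n, -n}) (by
      intro k hk
      simp only [Finset.mem_insert, Finset.mem_singleton, not_or] at hk
      rw [hz k hk.1 hk.2]
      simp)]
    rw [Finset.sum_pair hn, hsym]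
    push_cast
    ring_nf
  rw [hNorm, Real.sq_sqrt (by rw [hsum]; positivity)]
  rw [hsum]

lemma hNorm_sq_cos (s : ℝ) (N : ℕ) (hN : 1 ≤ N) :
    (hNorm s (cosCoef s N))^2 = 2 * Real.pi * (2 * (1 + (N:ℝ)^2)^s * (cc s N)^2) := by
  have h := hNorm_sq_general s (cosCoef s N) (N:ℤ) (by omega)
    (fun k h1 h2 => by simp [cosCoef, h1, h2])
    (by simp [cosCoef])
  rw [h, show cosCoef s N (N:ℤ) = ((cc s N :ℝ):ℂ) by simp [cosCoef, cc],
      Complex.norm_real, Real.norm_eq_abs, abs_of_nonneg (cc_nonneg s N)]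
  norm_cast

/-! ### Norm of the two nonzero Duhamel coefficients -/

lemma normC (s:ℝ) (N:ℕ) : ‖Complex.I * (N:ℂ) * ((cc s N : ℝ):ℂ)^2‖ = (N:ℝ) * (cc s N)^2 := by
  rw [norm_mul, norm_mul, Complex.norm_I, one_mul, norm_pow, Complex.norm_natCast,
      Complex.norm_real, Real.norm_eq_abs, abs_of_nonneg (cc_nonneg s N)]

lemma normsq_coef_2N (s t : ℝ) (N : ℕ) (hN : 1 ≤ N) :
    ‖duhamelCoef (cosCoef s N) t (2*(N:ℤ))‖^2
      = ((1+2*(N:ℝ))⁻¹)^2 * ((N:ℝ)*(cc s N)^2)^2 * ((2-2*Real.cos (ga N * t))/(ga N)^2) := by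
  have hg := ga_pos N hN
  have heval := coef_exp_eval (cosCoef s N) t (2*(N:ℤ))
    (Complex.I * (N:ℂ) * ((cc s N : ℝ):ℂ)^2) (pm (N:ℤ)) (ga N) (ne_of_gt hg)
    (ga_eq N) (fun τ => tsum_2N s N hN τ)
  rw [heval, norm_eval _ _ _ _ (ne_of_gt hg), normC]
  have habs : |((2*(N:ℤ) : ℤ):ℝ)| = 2*(N:ℝ) := by
    push_cast
    exact abs_of_nonneg (by positivity)
  rw [habs]

lemma normsq_coef_neg2N (s t : ℝ) (N : ℕ) (hN : 1 ≤ N) :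
    ‖duhamelCoef (cosCoef s N) t (-(2*(N:ℤ)))‖^2
      = ((1+2*(N:ℝ))⁻¹)^2 * ((N:ℝ)*(cc s N)^2)^2 * ((2-2*Real.cos (ga N * t))/(ga N)^2) := by
  have hg := ga_pos N hN
  have hγeq : -(ga N) = 2 * (-(pm (N:ℤ))) - pm (-(2*(N:ℤ))) := by
    rw [pm_neg', ga_eq N]; ring
  have hC : ‖-(Complex.I * (N:ℂ)) * ((cc s N : ℝ):ℂ)^2‖ = (N:ℝ) * (cc s N)^2 := by
    rw [show -(Complex.I * (N:ℂ)) * ((cc s N : ℝ):ℂ)^2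
        = -(Complex.I * (N:ℂ) * ((cc s N : ℝ):ℂ)^2) by ring, norm_neg, normC]
  have hts : ∀ τ : ℝ, ∑' m : ℤ, trm (cosCoef s N) τ (-(2*(N:ℤ))) m
      = (-(Complex.I * (N:ℂ)) * ((cc s N : ℝ):ℂ)^2) *
        (Complex.exp (-Complex.I * ((-(pm (N:ℤ)) : ℝ):ℂ) * (τ:ℂ)) *
         Complex.exp (-Complex.I * ((-(pm (N:ℤ)) : ℝ):ℂ) * (τ:ℂ))) := by
    intro τ
    rw [tsum_neg2N s N hN τ]
    have : -Complex.I * ((-(pm (N:ℤ)) : ℝ):ℂ) * (τ:ℂ) = Complex.I * ((pm (N:ℤ) : ℝ):ℂ) * (τ:ℂ) := by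
      push_cast; ring
    rw [this]
  have heval := coef_exp_eval (cosCoef s N) t (-(2*(N:ℤ)))
    (-(Complex.I * (N:ℂ)) * ((cc s N : ℝ):ℂ)^2) (-(pm (N:ℤ))) (-(ga N))
    (by simpa using ne_of_gt hg) hγeq hts
  rw [heval, norm_eval _ _ _ _ (by simpa using ne_of_gt hg), hC]
  have habs : |((-(2*(N:ℤ)) : ℤ):ℝ)| = 2*(N:ℝ) := by
    push_cast
    rw [abs_neg]
    exact abs_of_nonneg (by positivity)
  rw [habs]
  rw [show -(ga N) * t = -(ga N * t) by ring, Real.cos_neg, neg_pow, neg_one_sq, one_mul]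

lemma hNorm_sq_psi (s t : ℝ) (N : ℕ) (hN : 1 ≤ N) :
    (hNorm s (duhamelCoef (cosCoef s N) t))^2
      = 2 * Real.pi * (2 * (1 + (2*(N:ℝ))^2)^s *
        (((1+2*(N:ℝ))⁻¹)^2 * ((N:ℝ)*(cc s N)^2)^2 * ((2-2*Real.cos (ga N * t))/(ga N)^2))) := by
  have hz : ∀ k : ℤ, k ≠ 2*(N:ℤ) → k ≠ -(2*(N:ℤ)) → duhamelCoef (cosCoef s N) t k = 0 := by
    intro k h1 h2
    by_cases h0 : k = 0
    · subst h0; exact coef_of_tsum_zero _ _ _ (tsum_zero' s N hN)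
    · exact coef_of_tsum_zero _ _ _ (fun τ => tsum_other s N hN τ k h1 h2 h0)
  have hsym : ‖duhamelCoef (cosCoef s N) t (-(2*(N:ℤ)))‖ = ‖duhamelCoef (cosCoef s N) t (2*(N:ℤ))‖ := by
    rw [← Real.sqrt_sq (norm_nonneg (duhamelCoef (cosCoef s N) t (-(2*(N:ℤ))))),
        ← Real.sqrt_sq (norm_nonneg (duhamelCoef (cosCoef s N) t (2*(N:ℤ)))),
        normsq_coef_2N s t N hN, normsq_coef_neg2N s t N hN]
  have h := hNorm_sq_general s (duhamelCoef (cosCoef s N) t) (2*(N:ℤ)) (by omega) hz hsym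
  rw [h, normsq_coef_2N s t N hN]
  norm_cast

/-! ### The ratio -/

lemma hNorm_nonneg (s : ℝ) (a : ℤ → ℂ) : 0 ≤ hNorm s a := Real.sqrt_nonneg _

lemma rpow_sq_half (X u : ℝ) (hX : 0 < X) : (X^(u/2))^2 = X^u := by
  rw [← Real.rpow_natCast (X^(u/2)) 2, ← Real.rpow_mul hX.le]
  norm_num

lemma sq_rpow_half (X u : ℝ) (hX : 0 < X) : (X^2)^(u/2) = X^u := by
  rw [← Real.rpow_natCast X 2, ← Real.rpow_mul hX.le]
  congr 1
  push_cast
  ring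

lemma ratio_eq (s t : ℝ) (N : ℕ) (hN : 1 ≤ N) :
    hNorm s (duhamelCoef (cosCoef s N) t) / (hNorm s (cosCoef s N))^2
      = ((1+4*(N:ℝ)^2)/(1+(N:ℝ)^2)^2)^(s/2) *
        (((N:ℝ)/((1+2*(N:ℝ))*ga N)) * Real.sqrt (2-2*Real.cos (ga N*t)) / (2*Real.sqrt Real.pi)) := by
  have hg := ga_pos N hN
  have hc := cc_pos s N hN
  set g := ga N with hgdef
  set c := cc s N with hcdef
  set B := 2 - 2*Real.cos (g*t) with hBdef
  set X := 1 + 4*(N:ℝ)^2 with hXdef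
  set Y := 1 + (N:ℝ)^2 with hYdef
  have hX : (0:ℝ) < X := by positivity
  have hY : (0:ℝ) < Y := by positivity
  have hB : (0:ℝ) ≤ B := by
    have := Real.cos_le_one (g*t); rw [hBdef]; linarith
  have h2N : (0:ℝ) < 1 + 2*(N:ℝ) := by positivity
  set A := (N:ℝ)*c^2/((1+2*(N:ℝ))*g) with hAdef
  have hA : 0 ≤ A := div_nonneg (by positivity) (mul_nonneg h2N.le hg.le)
  have hπ : (0:ℝ) < Real.sqrt Real.pi := Real.sqrt_pos.mpr Real.pi_pos
  -- numerator
  have hψ : hNorm s (duhamelCoef (cosCoef s N) t)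
      = 2*Real.sqrt Real.pi * X^(s/2) * A * Real.sqrt B := by
    have hsq := hNorm_sq_psi s t N hN
    have hinner : ((1+2*(N:ℝ))⁻¹)^2 * ((N:ℝ)*c^2)^2 * (B/g^2) = A^2 * B := by
      have hA2 : A = ((N:ℝ)*c^2) * ((1+2*(N:ℝ))⁻¹ * g⁻¹) := by
        rw [hAdef, div_eq_mul_inv, mul_inv]
      rw [hA2, div_eq_mul_inv]
      ring
    rw [← hgdef, ← hcdef, ← hBdef] at hsq
    have hX4 : (1 + (2*(N:ℝ))^2) = X := by rw [hXdef]; ring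
    rw [hX4, hinner] at hsq
    have hrhs : 0 ≤ 2*Real.sqrt Real.pi * X^(s/2) * A * Real.sqrt B :=
      mul_nonneg (mul_nonneg (mul_nonneg (by positivity) (Real.rpow_nonneg hX.le _)) hA)
        (Real.sqrt_nonneg _)
    rw [← Real.sqrt_sq (hNorm_nonneg s _), hsq]
    rw [show 2 * Real.pi * (2 * X^s * (A^2*B))
        = (2*Real.sqrt Real.pi * X^(s/2) * A * Real.sqrt B)^2 by
      rw [show (2*Real.sqrt Real.pi * X^(s/2) * A * Real.sqrt B)^2
          = 2^2 * (Real.sqrt Real.pi)^2 * (X^(s/2))^2 * A^2 * (Real.sqrt B)^2 by ring,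
        Real.sq_sqrt Real.pi_nonneg, rpow_sq_half X s hX, Real.sq_sqrt hB]
      ring]
    exact Real.sqrt_sq hrhs
  have hφ := hNorm_sq_cos s N hN
  rw [hψ, hφ, ← hcdef, ← hYdef]
  have hXY : ((X/Y^2)^(s/2)) = X^(s/2)/Y^s := by
    rw [Real.div_rpow hX.le (by positivity), sq_rpow_half Y s hY]
  rw [hXY, hAdef]
  have hYs : (0:ℝ) < Y^s := Real.rpow_pos_of_pos hY s
  have hpi : Real.pi = Real.sqrt Real.pi * Real.sqrt Real.pi :=
    (Real.mul_self_sqrt Real.pi_nonneg).symm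
  rw [hpi]
  field_simp
  ring_nf
  rw [Real.sq_sqrt Real.pi_nonneg]
  ring_nf; rw [Real.sq_sqrt Real.pi_nonneg]; ring

/-! ### Limits -/
open Filter Topology

lemma tendsto_aux1 : Tendsto (fun n:ℕ => 1/((n:ℝ)+1)) atTop (𝓝 0) :=
  tendsto_one_div_add_atTop_nhds_zero_nat

lemma tendsto_aux2 : Tendsto (fun n:ℕ => 1/(2*(n:ℝ)+1)) atTop (𝓝 0) := by
  apply squeeze_zero (fun n => by positivity) (g := fun n:ℕ => 1/((n:ℝ)+1))
    (fun n => by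
      apply div_le_div_of_nonneg_left (by norm_num) (by positivity)
      have : (0:ℝ) ≤ (n:ℝ) := Nat.cast_nonneg n
      linarith)
  exact tendsto_aux1

lemma tendsto_half : Tendsto (fun N:ℕ => (N:ℝ)/(1+2*(N:ℝ))) atTop (𝓝 (1/2)) := by
  have h : ∀ N:ℕ, (N:ℝ)/(1+2*(N:ℝ)) = 1/2 - (1/2)*(1/(2*(N:ℝ)+1)) := by
    intro N
    have h1 : (0:ℝ) < 1+2*(N:ℝ) := by positivity
    have h2 : (0:ℝ) < 2*(N:ℝ)+1 := by positivity
    field_simp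
    ring
  exact Tendsto.congr (fun N => (h N).symm)
    (by simpa using tendsto_const_nhds.sub (tendsto_aux2.const_mul (1/2 : ℝ)))

lemma tendsto_f1 : Tendsto (fun N:ℕ => (N:ℝ)/(1+(N:ℝ))) atTop (𝓝 1) := by
  have h : ∀ N:ℕ, (N:ℝ)/(1+(N:ℝ)) = 1 - 1/((N:ℝ)+1) := by
    intro N
    have h1 : (0:ℝ) < 1+(N:ℝ) := by positivity
    field_simp
    ring
  exact Tendsto.congr (fun N => (h N).symm)
    (by simpa using tendsto_const_nhds.sub tendsto_aux1)

lemma tendsto_f2 : Tendsto (fun N:ℕ => 2*(N:ℝ)/(1+2*(N:ℝ))) atTop (𝓝 1) := by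
  have h : ∀ N:ℕ, 2*(N:ℝ)/(1+2*(N:ℝ)) = 1 - 1/(2*(N:ℝ)+1) := by
    intro N
    have h1 : (0:ℝ) < 1+2*(N:ℝ) := by positivity
    have h2 : (0:ℝ) < 2*(N:ℝ)+1 := by positivity
    field_simp
    ring
  exact Tendsto.congr (fun N => (h N).symm)
    (by simpa using tendsto_const_nhds.sub tendsto_aux2)

lemma tendsto_ga : Tendsto (fun N:ℕ => ga N) atTop (𝓝 1) := by
  have h : ∀ N:ℕ, ga N = ((N:ℝ)/(1+(N:ℝ))) * (2*(N:ℝ)/(1+2*(N:ℝ))) := by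
    intro N
    have h1 : (0:ℝ) < 1+(N:ℝ) := by positivity
    have h2 : (0:ℝ) < 1+2*(N:ℝ) := by positivity
    rw [ga]
    field_simp
  exact Tendsto.congr (fun N => (h N).symm)
    (by simpa using tendsto_f1.mul tendsto_f2)

lemma tendsto_P (s : ℝ) (hs : s < 0) :
    Tendsto (fun N:ℕ => ((1+4*(N:ℝ)^2)/(1+(N:ℝ)^2)^2)^(s/2)) atTop atTop := by
  set u : ℕ → ℝ := fun N => (1+4*(N:ℝ)^2)/(1+(N:ℝ)^2)^2 with hu
  have hu0 : ∀ N, 0 < u N := fun N => by rw [hu]; positivity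
  have hub : ∀ N:ℕ, u N ≤ 4*(1/((N:ℝ)+1)) := by
    intro N
    rw [hu]
    have h1 : (0:ℝ) < (1+(N:ℝ)^2)^2 := by positivity
    have h2 : (0:ℝ) < (N:ℝ)+1 := by positivity
    rw [div_le_iff₀ h1, show (4:ℝ)*(1/((N:ℝ)+1)) = 4/((N:ℝ)+1) by ring, div_mul_eq_mul_div,
        le_div_iff₀ h2]
    nlinarith [sq_nonneg (2*(N:ℝ)^2-(N:ℝ)), sq_nonneg ((N:ℝ)-1), (by positivity : (0:ℝ) ≤ (N:ℝ))]
  have hu0' : Tendsto u atTop (𝓝 0) := by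
    apply squeeze_zero (fun N => (hu0 N).le) hub
    have := tendsto_aux1.const_mul (4:ℝ)
    simpa using this
  have huw : Tendsto u atTop (𝓝[>] 0) :=
    tendsto_nhdsWithin_iff.mpr ⟨hu0', Eventually.of_forall (fun N => hu0 N)⟩
  have hinv : Tendsto (fun N => (u N)⁻¹) atTop atTop := huw.inv_tendsto_nhdsGT_zero
  have hr : Tendsto (fun x:ℝ => x^(-(s/2))) atTop atTop := tendsto_rpow_atTop (by linarith)
  have hcomp := hr.comp hinv
  apply hcomp.congr
  intro N
  simp only [Function.comp]
  rw [Real.inv_rpow (hu0 N).le, ← Real.rpow_neg (hu0 N).le, neg_neg]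

lemma cos_lt_one_aux (t : ℝ) (h0 : 0 < t) (h2 : t < 2*Real.pi) : Real.cos t < 1 := by
  refine lt_of_le_of_ne (Real.cos_le_one t) (fun h => ?_)
  have := (Real.cos_eq_one_iff_of_lt_of_lt (by linarith) h2).mp h
  linarith

lemma tendsto_ratio (s t : ℝ) (hs : s < 0) (ht0 : 0 < t) (ht2 : t < 2*Real.pi) :
    Tendsto (fun N : ℕ => hNorm s (duhamelCoef (cosCoef s N) t) / (hNorm s (cosCoef s N)) ^ 2)
      atTop atTop := by
  have hπ : (0:ℝ) < Real.sqrt Real.pi := Real.sqrt_pos.mpr Real.pi_pos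
  set F : ℝ → ℝ := fun x => Real.sqrt (2-2*Real.cos (x*t)) with hF
  have hFc : Continuous F := by
    apply Real.continuous_sqrt.comp
    continuity
  set Q : ℕ → ℝ := fun N => ((N:ℝ)/((1+2*(N:ℝ))*ga N)) * F (ga N) / (2*Real.sqrt Real.pi)
    with hQ
  set L : ℝ := ((1/2) * 1⁻¹) * (F 1 / (2*Real.sqrt Real.pi)) with hL
  have hQt : Tendsto Q atTop (𝓝 L) := by
    have h1 : Tendsto (fun N:ℕ => ((N:ℝ)/(1+2*(N:ℝ))) * (ga N)⁻¹) atTop (𝓝 ((1/2) * 1⁻¹)) :=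
      tendsto_half.mul (tendsto_ga.inv₀ one_ne_zero)
    have h2 : Tendsto (fun N:ℕ => F (ga N) / (2*Real.sqrt Real.pi)) atTop
        (𝓝 (F 1 / (2*Real.sqrt Real.pi))) :=
      ((hFc.tendsto 1).comp tendsto_ga).div_const _
    have := h1.mul h2
    apply this.congr
    intro N
    show _ = (N:ℝ) / ((1 + 2 * (N:ℝ)) * ga N) * F (ga N) / (2 * Real.sqrt Real.pi)
    rw [div_eq_mul_inv ((N:ℝ)) ((1 + 2 * (N:ℝ)) * ga N), mul_inv]
    ring
  have hL0 : 0 < L := by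
    rw [hL, hF]
    simp only
    have hc := cos_lt_one_aux t ht0 ht2
    rw [one_mul]
    have : (0:ℝ) < Real.sqrt (2-2*Real.cos t) := Real.sqrt_pos.mpr (by linarith)
    positivity
  have hPQ := (tendsto_P s hs).atTop_mul_pos hL0 hQt
  apply hPQ.congr'
  filter_upwards [eventually_ge_atTop 1] with N hN
  rw [ratio_eq s t N hN, hQ]

/-- **Failure of the quadratic Duhamel estimate for `s < 0`**: the ratio
`‖ψ_N(t)‖_{H^s}/‖φ_N‖²_{H^s}` blows up as `N → ∞` for each `t ∈ (0,T)`;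
in particular no constant `c₀ > 0` satisfying the bilinear estimate (and hence
no space `X_T` as in Theorem 4.1) can exist. -/
theorem rBO_illposedness (s T : ℝ) (hs : s < 0) (hT0 : 0 < T) (hT : T < 2 * Real.pi) :
    (∀ t ∈ Set.Ioo (0:ℝ) T,
      Filter.Tendsto
        (fun N : ℕ => hNorm s (duhamelCoef (cosCoef s N) t) / (hNorm s (cosCoef s N)) ^ 2)
        Filter.atTop Filter.atTop) ∧
    (∀ c₀ > (0:ℝ), ∀ t ∈ Set.Ioo (0:ℝ) T, ∃ φ : ℤ → ℂ,
      c₀ * (hNorm s φ) ^ 2 < hNorm s (duhamelCoef φ t)) := by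
  constructor
  · intro t ht
    exact tendsto_ratio s t hs ht.1 (lt_trans ht.2 hT)
  · intro c₀ _ t ht
    have h := tendsto_ratio s t hs ht.1 (lt_trans ht.2 hT)
    obtain ⟨N, hr, hN⟩ := ((h.eventually_gt_atTop c₀).and (eventually_ge_atTop 1)).exists
    refine ⟨cosCoef s N, ?_⟩
    have hpos : 0 < (hNorm s (cosCoef s N))^2 := by
      rw [hNorm_sq_cos s N hN]
      have hc := cc_pos s N hN
      have hrp : (0:ℝ) < (1+(N:ℝ)^2)^s := Real.rpow_pos_of_pos (by positivity) s
      positivity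
    exact (lt_div_iff₀ hpos).mp hr
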